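/- arXiv:2003.04665 — 3 statements merged into one kernel-verified Lean document; each statement's English description precedes it below -/
import Mathlib

section
/- Let F(x,y) = (|x|² + |y|² + 1 − ε²)² − 4|x|² be the defining polynomial of the complex hypersurface A ⊂ ℂ^{n+m}, with 0 < ε < 1. Then a point (x, y) ∈ ℂⁿ × ℂᵐ satisfies F(x,y) = 0 and ∇F(x,y) = 0 if and only if x₁ = ⋯ = xₙ = 0 and y₁² + ⋯ + yₘ² + 1 − ε² = 0. -/
open ContinuousLinearMap

/-- a point `(x,y) ∈ ℂⁿ × ℂᵐ` satisfies `F(x,y) = 0` and `∇F(x,y) = 0`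
(where `F(x,y) = (|x|² + |y|² + 1 − ε²)² − 4|x|²`, with holomorphic quadratic forms)
iff `x = 0` and `y₁² + ⋯ + yₘ² + 1 − ε² = 0`. -/
theorem stmt2 (n m : ℕ) (hn : 1 ≤ n) (hm : 1 ≤ m) (ε : ℝ) (hε0 : 0 < ε) (hε1 : ε < 1)
    (F : ((Fin n → ℂ) × (Fin m → ℂ)) → ℂ)
    (hF : ∀ p : (Fin n → ℂ) × (Fin m → ℂ),
      F p = ((∑ i, p.1 i ^ 2) + (∑ j, p.2 j ^ 2) + 1 - (ε : ℂ) ^ 2) ^ 2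
              - 4 * ∑ i, p.1 i ^ 2)
    (p : (Fin n → ℂ) × (Fin m → ℂ)) :
    (F p = 0 ∧ fderiv ℂ F p = 0) ↔
      ((∀ i, p.1 i = 0) ∧ (∑ j, p.2 j ^ 2) + 1 - (ε : ℂ) ^ 2 = 0) := by
  classical
  set c : ℂ := 1 - (ε : ℂ) ^ 2 with hc
  have hFeq : F = fun q : (Fin n → ℂ) × (Fin m → ℂ) =>
      ((∑ i, q.1 i * q.1 i) + (∑ j, q.2 j * q.2 j) + c) *
        ((∑ i, q.1 i * q.1 i) + (∑ j, q.2 j * q.2 j) + c)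
      - 4 * ∑ i, q.1 i * q.1 i := by
    funext q
    have hsq : ∀ {k : ℕ} (f : Fin k → ℂ), (∑ i, f i * f i) = ∑ i, f i ^ 2 :=
      fun f => Finset.sum_congr rfl fun i _ => (sq (f i)).symm
    rw [hF q, hc, hsq, hsq]
    ring
  -- linear maps: coordinate projections
  set Li : Fin n → ((Fin n → ℂ) × (Fin m → ℂ)) →L[ℂ] ℂ :=
    fun i => (ContinuousLinearMap.proj i).comp
      (ContinuousLinearMap.fst ℂ (Fin n → ℂ) (Fin m → ℂ)) with hLi
  set Mj : Fin m → ((Fin n → ℂ) × (Fin m → ℂ)) →L[ℂ] ℂ :=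
    fun j => (ContinuousLinearMap.proj j).comp
      (ContinuousLinearMap.snd ℂ (Fin n → ℂ) (Fin m → ℂ)) with hMj
  set A : ((Fin n → ℂ) × (Fin m → ℂ)) →L[ℂ] ℂ :=
    ∑ i, (p.1 i • Li i + p.1 i • Li i) with hA
  set B : ((Fin n → ℂ) × (Fin m → ℂ)) →L[ℂ] ℂ :=
    ∑ j, (p.2 j • Mj j + p.2 j • Mj j) with hB
  set u : ℂ := (∑ i, p.1 i * p.1 i) + (∑ j, p.2 j * p.2 j) + c with hu
  have hSi : ∀ i : Fin n, HasFDerivAt (fun q : (Fin n → ℂ) × (Fin m → ℂ) => q.1 i * q.1 i)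
      (p.1 i • Li i + p.1 i • Li i) p := fun i =>
    (Li i).hasFDerivAt.mul (Li i).hasFDerivAt
  have hTj : ∀ j : Fin m, HasFDerivAt (fun q : (Fin n → ℂ) × (Fin m → ℂ) => q.2 j * q.2 j)
      (p.2 j • Mj j + p.2 j • Mj j) p := fun j =>
    (Mj j).hasFDerivAt.mul (Mj j).hasFDerivAt
  have hS : HasFDerivAt (fun q : (Fin n → ℂ) × (Fin m → ℂ) => ∑ i, q.1 i * q.1 i) A p :=
    HasFDerivAt.fun_sum (fun i _ => hSi i)
  have hT : HasFDerivAt (fun q : (Fin n → ℂ) × (Fin m → ℂ) => ∑ j, q.2 j * q.2 j) B p :=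
    HasFDerivAt.fun_sum (fun j _ => hTj j)
  have hU : HasFDerivAt (fun q : (Fin n → ℂ) × (Fin m → ℂ) =>
      (∑ i, q.1 i * q.1 i) + (∑ j, q.2 j * q.2 j) + c) (A + B) p := by
    simpa using (hS.add hT).add_const c
  have hFderiv : HasFDerivAt F (u • (A + B) + u • (A + B) - (4 : ℂ) • A) p := by
    rw [hFeq]
    exact (hU.mul hU).sub (hS.const_mul 4)
  set D : ((Fin n → ℂ) × (Fin m → ℂ)) →L[ℂ] ℂ :=
    u • (A + B) + u • (A + B) - (4 : ℂ) • A with hD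
  have hfd : fderiv ℂ F p = D := hFderiv.fderiv
  -- evaluation of A and B at basis vectors
  have hAval : ∀ i : Fin n, A (Pi.single i 1, 0) = 2 * p.1 i := by
    intro i
    simp [hA, hLi, ContinuousLinearMap.sum_apply, Pi.single_apply,
      mul_ite, mul_one, mul_zero, two_mul, Finset.sum_add_distrib,
      Finset.sum_ite_eq']
  have hBval : ∀ i : Fin n, B (Pi.single i 1, 0) = 0 := by
    intro i
    simp [hB, hMj, ContinuousLinearMap.sum_apply]
  have hAval' : ∀ j : Fin m, A ((0 : Fin n → ℂ), Pi.single j 1) = 0 := by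
    intro j
    simp [hA, hLi, ContinuousLinearMap.sum_apply]
  have hBval' : ∀ j : Fin m, B ((0 : Fin n → ℂ), Pi.single j 1) = 2 * p.2 j := by
    intro j
    simp [hB, hMj, ContinuousLinearMap.sum_apply, Pi.single_apply,
      mul_ite, mul_one, mul_zero, two_mul, Finset.sum_add_distrib,
      Finset.sum_ite_eq']
  constructor
  · rintro ⟨hF0, hgrad0⟩
    rw [hfd] at hgrad0
    have hx : ∀ i : Fin n, 4 * p.1 i * (u - 2) = 0 := by
      intro i
      have := congrFun (congrArg DFunLike.coe hgrad0) (Pi.single i 1, 0)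
      simp only [hD, ContinuousLinearMap.sub_apply, ContinuousLinearMap.add_apply,
        ContinuousLinearMap.smul_apply, ContinuousLinearMap.zero_apply, smul_eq_mul,
        hAval i, hBval i] at this
      linear_combination this
    have hy : ∀ j : Fin m, 4 * p.2 j * u = 0 := by
      intro j
      have := congrFun (congrArg DFunLike.coe hgrad0) ((0 : Fin n → ℂ), Pi.single j 1)
      simp only [hD, ContinuousLinearMap.sub_apply, ContinuousLinearMap.add_apply,
        ContinuousLinearMap.smul_apply, ContinuousLinearMap.zero_apply, smul_eq_mul,
        hAval' j, hBval' j] at this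
      linear_combination this
    have hF0' : u * u - 4 * ∑ i, p.1 i * p.1 i = 0 := by
      rw [hFeq] at hF0; exact hF0
    by_cases hu0 : u = 0
    · have hx0 : ∀ i, p.1 i = 0 := by
        intro i
        have := hx i
        rw [hu0] at this
        have h2 : p.1 i * (-8 : ℂ) = 0 := by linear_combination this
        rcases mul_eq_zero.mp h2 with h | h
        · exact h
        · norm_num at h
      refine ⟨hx0, ?_⟩
      have hSz : (∑ i, p.1 i ^ 2) = 0 := by
        apply Finset.sum_eq_zero; intro i _; rw [hx0 i]; ring
      have : u = (∑ i, p.1 i ^ 2) + ((∑ j, p.2 j ^ 2) + 1 - (ε : ℂ) ^ 2) := by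
        rw [hu, hc]; simp only [pow_two]; ring
      rw [hu0, hSz] at this  -- wrong direction; fix below
      linear_combination -this
    · -- u ≠ 0 : all y_j = 0
      have hy0 : ∀ j, p.2 j = 0 := by
        intro j
        have := hy j
        rcases mul_eq_zero.mp this with h | h
        · rcases mul_eq_zero.mp h with h' | h'
          · norm_num at h'
          · exact h'
        · exact absurd h hu0
      have hT0 : (∑ j, p.2 j * p.2 j) = 0 := by
        apply Finset.sum_eq_zero; intro j _; rw [hy0 j]; ring
      by_cases hx0 : ∀ i, p.1 i = 0
      · exfalso
        have hS0 : (∑ i, p.1 i * p.1 i) = 0 := by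
          apply Finset.sum_eq_zero; intro i _; rw [hx0 i]; ring
        rw [hS0] at hF0'
        have : u * u = 0 := by linear_combination hF0'
        exact hu0 (by simpa [mul_self_eq_zero] using this)
      · exfalso
        push_neg at hx0
        obtain ⟨i, hi⟩ := hx0
        have hu2 : u = 2 := by
          have := hx i
          rcases mul_eq_zero.mp this with h | h
          · rcases mul_eq_zero.mp h with h' | h'
            · norm_num at h'
            · exact absurd h' hi
          · exact sub_eq_zero.mp h
        have hS1 : (∑ i, p.1 i * p.1 i) = 1 := by
          rw [hu2] at hF0'
          linear_combination -hF0' / 4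
        have : u = (∑ i, p.1 i * p.1 i) + (∑ j, p.2 j * p.2 j) + c := hu
        rw [hu2, hS1, hT0, hc] at this
        have hε2 : (ε : ℂ) ^ 2 = 0 := by linear_combination this
        have : (ε : ℂ) = 0 := by
          exact pow_eq_zero_iff (by norm_num) |>.mp hε2
        exact absurd (by exact_mod_cast this) (ne_of_gt hε0)
  · rintro ⟨hx0, hy0⟩
    have hS0 : (∑ i, p.1 i * p.1 i) = 0 := by
      apply Finset.sum_eq_zero; intro i _; rw [hx0 i]; ring
    have hu0 : u = 0 := by
      rw [hu, hS0, hc]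
      have : (∑ j, p.2 j * p.2 j) = ∑ j, p.2 j ^ 2 := by
        apply Finset.sum_congr rfl; intro j _; ring
      rw [this]
      linear_combination hy0
    have hA0 : A = 0 := by
      rw [hA]
      apply Finset.sum_eq_zero
      intro i _
      rw [hx0 i]
      module
    constructor
    · simp only [hFeq]
      rw [← hu, hu0, hS0]
      ring
    · rw [hfd, hD, hA0, hu0]
      module
end

section
/- Let F(x,y) = (|x|²+|y|²+1−ε²)² − 4|x|² with 0 < ε < 1, and let s = (0, i√(1−ε²), 0, …, 0) be a singular point of A = {F = 0} (x = 0, y₁ = i√(1−ε²), other yⱼ = 0). Then the Hessian matrix of second partial derivatives of F at s, restricted to the (n+1)-dimensional coordinate subspace spanned by the directions x₁, …, xₙ, y₁, is a nondegenerate complex symmetric bilinear form. -/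
open Real Complex

section Aux18

variable {n : ℕ}

/-- coordinate projection -/
noncomputable def pr18 (n : ℕ) (k : Fin (n+1)) : ((Fin (n+1) → ℂ) →L[ℂ] ℂ) :=
  ContinuousLinearMap.proj k

@[simp] lemma pr18_apply (k : Fin (n+1)) (v : Fin (n+1) → ℂ) : pr18 n k v = v k := rfl

noncomputable def LQ18 (n : ℕ) (z : Fin (n+1) → ℂ) : ((Fin (n+1) → ℂ) →L[ℂ] ℂ) :=
  ∑ i : Fin n, (2 * z i.castSucc) • pr18 n i.castSucc

noncomputable def LH18 (n : ℕ) (c : ℂ) (z : Fin (n+1) → ℂ) : ((Fin (n+1) → ℂ) →L[ℂ] ℂ) :=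
  LQ18 n z + (2 * (c + z (Fin.last n))) • pr18 n (Fin.last n)

@[simp] lemma LQ18_apply (z v : Fin (n+1) → ℂ) :
    LQ18 n z v = ∑ i : Fin n, 2 * z i.castSucc * v i.castSucc := by
  simp [LQ18]

@[simp] lemma LH18_apply (c : ℂ) (z v : Fin (n+1) → ℂ) :
    LH18 n c z v = (∑ i : Fin n, 2 * z i.castSucc * v i.castSucc)
      + 2 * (c + z (Fin.last n)) * v (Fin.last n) := by
  simp [LH18]

lemma hasFDerivAt_Q18 (z : Fin (n+1) → ℂ) :
    HasFDerivAt (fun z : Fin (n+1) → ℂ => ∑ i : Fin n, z i.castSucc ^ 2) (LQ18 n z) z := by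
  have key : ∀ i : Fin n, HasFDerivAt (fun z : Fin (n+1) → ℂ => z i.castSucc ^ 2)
      ((2 * z i.castSucc) • pr18 n i.castSucc) z := by
    intro i
    have h := (hasFDerivAt_apply (𝕜 := ℂ) i.castSucc z)
    have h2 := h.fun_mul h
    have heq : (fun z : Fin (n+1) → ℂ => z i.castSucc ^ 2)
        = fun z : Fin (n+1) → ℂ => z i.castSucc * z i.castSucc := by
      funext z; ring
    rw [heq]
    convert! h2 using 1
    ext v
    simp [pr18]
    ring
  unfold LQ18
  exact HasFDerivAt.fun_sum (fun i _ => key i)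

lemma hasFDerivAt_H18 (c e : ℂ) (z : Fin (n+1) → ℂ) :
    HasFDerivAt (fun z : Fin (n+1) → ℂ =>
        (∑ i : Fin n, z i.castSucc ^ 2) + (c + z (Fin.last n)) ^ 2 + 1 - e)
      (LH18 n c z) z := by
  have hlast : HasFDerivAt (fun z : Fin (n+1) → ℂ => (c + z (Fin.last n)) ^ 2)
      ((2 * (c + z (Fin.last n))) • pr18 n (Fin.last n)) z := by
    have h := ((hasFDerivAt_apply (𝕜 := ℂ) (Fin.last n) z).const_add c)
    have h2 := h.fun_mul h
    have heq : (fun z : Fin (n+1) → ℂ => (c + z (Fin.last n)) ^ 2)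
        = fun z : Fin (n+1) → ℂ => (c + z (Fin.last n)) * (c + z (Fin.last n)) := by
      funext z; ring
    rw [heq]
    convert! h2 using 1
    ext v
    simp [pr18]
    ring
  exact (((hasFDerivAt_Q18 z).add hlast).add_const 1).sub_const e

lemma hasFDerivAt_G18 (c e : ℂ) (z : Fin (n+1) → ℂ) :
    HasFDerivAt (fun z : Fin (n+1) → ℂ =>
        ((∑ i : Fin n, z i.castSucc ^ 2) + (c + z (Fin.last n)) ^ 2 + 1 - e) ^ 2
          - 4 * ∑ i : Fin n, z i.castSucc ^ 2)
      ((2 * ((∑ i : Fin n, z i.castSucc ^ 2) + (c + z (Fin.last n)) ^ 2 + 1 - e)) • LH18 n c z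
        - (4 : ℂ) • LQ18 n z) z := by
  have hH := hasFDerivAt_H18 (n := n) c e z
  have hQ := hasFDerivAt_Q18 (n := n) z
  have h2 := hH.fun_mul hH
  have h4 := hQ.const_mul (4 : ℂ)
  have heq : (fun z : Fin (n+1) → ℂ =>
      ((∑ i : Fin n, z i.castSucc ^ 2) + (c + z (Fin.last n)) ^ 2 + 1 - e) ^ 2
        - 4 * ∑ i : Fin n, z i.castSucc ^ 2)
      = fun z : Fin (n+1) → ℂ =>
      (((∑ i : Fin n, z i.castSucc ^ 2) + (c + z (Fin.last n)) ^ 2 + 1 - e) *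
        ((∑ i : Fin n, z i.castSucc ^ 2) + (c + z (Fin.last n)) ^ 2 + 1 - e))
        - 4 * ∑ i : Fin n, z i.castSucc ^ 2 := by
    funext z; ring
  rw [heq]
  convert! h2.fun_sub h4 using 1
  ext v
  simp
  ring

end Aux18

/-- let `G` be the restriction of
`F(x,y) = (|x|²+|y|²+1−ε²)² − 4|x|²` to the affine `(n+1)`-dimensional coordinate
subspace through the singular point `s = (0, i√(1−ε²), 0, …, 0)` spanned by the
directions `x₁, …, xₙ, y₁` (the last coordinate `z_{n}` perturbing `y₁`).
Then the Hessian matrix of second partial derivatives of `G` at `0` (i.e. of `F`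
at `s`, restricted to this subspace) is nondegenerate. -/
theorem stmt18 (n m : ℕ) (hm : 1 ≤ m) (ε : ℝ) (hε0 : 0 < ε) (hε1 : ε < 1)
    (G : (Fin (n + 1) → ℂ) → ℂ)
    (hG : ∀ z : Fin (n + 1) → ℂ,
      G z = ((∑ i : Fin n, z i.castSucc ^ 2)
              + (Complex.I * Real.sqrt (1 - ε ^ 2) + z (Fin.last n)) ^ 2
              + 1 - (ε : ℂ) ^ 2) ^ 2
            - 4 * ∑ i : Fin n, z i.castSucc ^ 2) :
    (Matrix.of fun i j : Fin (n + 1) =>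
        fderiv ℂ (fun z => fderiv ℂ G z (Pi.single j 1)) 0 (Pi.single i 1)).det ≠ 0 := by
  have hpos : (0:ℝ) < 1 - ε ^ 2 := by nlinarith
  set c : ℂ := Complex.I * (Real.sqrt (1 - ε ^ 2) : ℂ) with hcdef
  have hc2 : c ^ 2 = -(1 - (ε:ℂ) ^ 2) := by
    rw [hcdef, mul_pow, Complex.I_sq, ← Complex.ofReal_pow, Real.sq_sqrt hpos.le]
    push_cast; ring
  have hGfun : G = fun z : Fin (n+1) → ℂ =>
      ((∑ i : Fin n, z i.castSucc ^ 2) + (c + z (Fin.last n)) ^ 2 + 1 - (ε:ℂ) ^ 2) ^ 2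
        - 4 * ∑ i : Fin n, z i.castSucc ^ 2 := funext hG
  -- abbreviations
  set e : ℂ := (ε : ℂ) ^ 2 with hedef
  have hGz : ∀ z : Fin (n+1) → ℂ, HasFDerivAt G
      ((2 * ((∑ i : Fin n, z i.castSucc ^ 2) + (c + z (Fin.last n)) ^ 2 + 1 - e)) • LH18 n c z
        - (4 : ℂ) • LQ18 n z) z := by
    intro z; rw [hGfun]; exact hasFDerivAt_G18 c e z
  -- first derivative in direction single j 1, as explicit function of z
  have hfirst : ∀ j : Fin (n+1), (fun z => fderiv ℂ G z (Pi.single j 1))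
      = fun z : Fin (n+1) → ℂ =>
        2 * ((∑ i : Fin n, z i.castSucc ^ 2) + (c + z (Fin.last n)) ^ 2 + 1 - e) *
          ((∑ i : Fin n, 2 * z i.castSucc * (Pi.single j 1 : Fin (n+1) → ℂ) i.castSucc)
            + 2 * (c + z (Fin.last n)) * (Pi.single j 1 : Fin (n+1) → ℂ) (Fin.last n))
          - 4 * ∑ i : Fin n, 2 * z i.castSucc * (Pi.single j 1 : Fin (n+1) → ℂ) i.castSucc := by
    intro j
    funext z
    rw [(hGz z).fderiv]
    simp
    try ring
  -- second derivative
  have hΦ : ∀ j : Fin (n+1), HasFDerivAt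
      (fun z : Fin (n+1) → ℂ =>
        2 * ((∑ i : Fin n, z i.castSucc ^ 2) + (c + z (Fin.last n)) ^ 2 + 1 - e) *
          ((∑ i : Fin n, 2 * z i.castSucc * (Pi.single j 1 : Fin (n+1) → ℂ) i.castSucc)
            + 2 * (c + z (Fin.last n)) * (Pi.single j 1 : Fin (n+1) → ℂ) (Fin.last n))
          - 4 * ∑ i : Fin n, 2 * z i.castSucc * (Pi.single j 1 : Fin (n+1) → ℂ) i.castSucc)
      ((2 * c * (Pi.single j 1 : Fin (n+1) → ℂ) (Fin.last n)) • ((2:ℂ) • LH18 n c 0)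
        - (4:ℂ) • (∑ i : Fin n,
            (2 * (Pi.single j 1 : Fin (n+1) → ℂ) i.castSucc) • pr18 n i.castSucc)) 0 := by
    intro j
    have hS : HasFDerivAt
        (fun z : Fin (n+1) → ℂ =>
          ∑ i : Fin n, 2 * z i.castSucc * (Pi.single j 1 : Fin (n+1) → ℂ) i.castSucc)
        (∑ i : Fin n,
          (2 * (Pi.single j 1 : Fin (n+1) → ℂ) i.castSucc) • pr18 n i.castSucc) 0 := by
      have key : ∀ i : Fin n, HasFDerivAt
          (fun z : Fin (n+1) → ℂ =>
            2 * z i.castSucc * (Pi.single j 1 : Fin (n+1) → ℂ) i.castSucc)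
          ((2 * (Pi.single j 1 : Fin (n+1) → ℂ) i.castSucc) • pr18 n i.castSucc) 0 := by
        intro i
        have h := ((hasFDerivAt_apply (𝕜 := ℂ) i.castSucc
          (0 : Fin (n+1) → ℂ)).const_mul (2:ℂ)).mul_const
            ((Pi.single j 1 : Fin (n+1) → ℂ) i.castSucc)
        convert! h using 1
        ext v
        simp [pr18]
        ring
      exact HasFDerivAt.fun_sum (fun i _ => key i)
    have hT : HasFDerivAt
        (fun z : Fin (n+1) → ℂ =>
          2 * (c + z (Fin.last n)) * (Pi.single j 1 : Fin (n+1) → ℂ) (Fin.last n))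
        ((2 * (Pi.single j 1 : Fin (n+1) → ℂ) (Fin.last n)) • pr18 n (Fin.last n)) 0 := by
      have h := (((hasFDerivAt_apply (𝕜 := ℂ) (Fin.last n)
        (0 : Fin (n+1) → ℂ)).const_add c).const_mul (2:ℂ)).mul_const
          ((Pi.single j 1 : Fin (n+1) → ℂ) (Fin.last n))
      convert! h using 1
      ext v
      simp [pr18]
      ring
    have hH0 := (hasFDerivAt_H18 (n := n) c e 0).const_mul (2:ℂ)
    have hbig := (hH0.fun_mul (hS.fun_add hT)).fun_sub (hS.const_mul (4:ℂ))
    convert! hbig using 1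
    have he0 : c ^ 2 + 1 - e = 0 := by rw [hc2]; ring
    ext v
    simp [pr18]
    rw [he0]
    ring
  have hentry : ∀ i j : Fin (n+1),
      fderiv ℂ (fun z => fderiv ℂ G z (Pi.single j 1)) 0 (Pi.single i 1)
        = 8 * c ^ 2 * (Pi.single i 1 : Fin (n+1) → ℂ) (Fin.last n)
            * (Pi.single j 1 : Fin (n+1) → ℂ) (Fin.last n)
          - ∑ k : Fin n, (Pi.single j 1 : Fin (n+1) → ℂ) k.castSucc
              * (Pi.single i 1 : Fin (n+1) → ℂ) k.castSucc * 8 := by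
    intro i j
    rw [hfirst j, (hΦ j).fderiv]
    simp [LH18, LQ18, pr18, Finset.mul_sum]
    ring
  have hdiag : (Matrix.of fun i j : Fin (n + 1) =>
      fderiv ℂ (fun z => fderiv ℂ G z (Pi.single j 1)) 0 (Pi.single i 1))
      = Matrix.diagonal (fun i => if i = Fin.last n then 8 * c ^ 2 else (-8 : ℂ)) := by
    ext i j
    rw [Matrix.of_apply, hentry i j]
    rcases Fin.eq_castSucc_or_eq_last i with ⟨i', rfl⟩ | rfl <;>
      rcases Fin.eq_castSucc_or_eq_last j with ⟨j', rfl⟩ | rfl <;>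
        simp [Pi.single_apply, Matrix.diagonal_apply, Fin.castSucc_inj,
          (Fin.castSucc_lt_last _).ne, eq_comm] <;> split_ifs <;> norm_num
  rw [hdiag, Matrix.det_diagonal]
  refine Finset.prod_ne_zero_iff.mpr fun i _ => ?_
  have h1e : (1 : ℂ) - e ≠ 0 := by
    rw [hedef]
    have : (1 : ℂ) - (ε : ℂ) ^ 2 = ((1 - ε ^ 2 : ℝ) : ℂ) := by push_cast; ring
    rw [this]
    exact_mod_cast hpos.ne'
  split_ifs
  · rw [hc2]
    intro h
    apply h1e
    field_simp at h
    linear_combination (-1/8 : ℂ) * h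
  · norm_num
end

section
/- Suppose the restriction of a linear function L: ℝ^{n+m} → ℝ, L(x,y) = α·x + γ·y, to the hypersurface ∂W = {(√(|x|²)−1)² + |y|² = ε²} is a Morse function (0 < ε < 1/√2, α ≠ 0, γ = 0, L(x,y) = α·x). Then L|∂W has exactly four critical points. -/
open Real

set_option maxHeartbeats 2000000 in
/-- for `0 < ε < 1/√2` and a nonzero linear function
`L(x,y) = α·x` (the case `γ = 0`), the restriction `L|∂W` has exactly four
critical points (Lagrange condition with respect to the polynomial defining
function `F = (|x|²+|y|²+1−ε²)² − 4|x|²`). -/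
theorem stmt19 (n m : ℕ) (ε : ℝ) (hε0 : 0 < ε) (hε1 : ε < 1 / Real.sqrt 2)
    (α : Fin (n + 1) → ℝ) (hα : α ≠ 0) :
    let C : Set ((Fin (n + 1) → ℝ) × (Fin (m + 1) → ℝ)) :=
      {p | (Real.sqrt (∑ i, p.1 i ^ 2) - 1) ^ 2 + (∑ j, p.2 j ^ 2) = ε ^ 2 ∧
        ∃ l : ℝ,
          (∀ k, α k =
            l * (4 * ((∑ i, p.1 i ^ 2) + (∑ j, p.2 j ^ 2) + 1 - ε ^ 2) * p.1 k
                  - 8 * p.1 k)) ∧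
          (∀ k, (0 : ℝ) =
            l * (4 * ((∑ i, p.1 i ^ 2) + (∑ j, p.2 j ^ 2) + 1 - ε ^ 2) * p.2 k))}
    C.Finite ∧ C.ncard = 4 := by
  intro C
  -- basic facts
  have hε2 : ε ^ 2 < 1 / 2 := by
    have h1 : ε ^ 2 < (1 / Real.sqrt 2) ^ 2 := by
      apply pow_lt_pow_left₀ hε1 hε0.le
      norm_num
    have h2 : (1 / Real.sqrt 2 : ℝ) ^ 2 = 1 / 2 := by
      rw [div_pow, one_pow, sq_sqrt (by norm_num : (2:ℝ) ≥ 0)]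
    linarith [h1, h2.le, h2.ge]
  have hε1' : ε < 1 := by nlinarith
  obtain ⟨i0, hi0⟩ : ∃ i, α i ≠ 0 := Function.ne_iff.mp hα
  set A2 : ℝ := ∑ i, α i ^ 2 with hA2def
  have hA2 : 0 < A2 := by
    apply Finset.sum_pos' (fun i _ => sq_nonneg _)
    exact ⟨i0, Finset.mem_univ _, by positivity⟩
  set A : ℝ := Real.sqrt A2 with hAdef
  have hA : 0 < A := Real.sqrt_pos.mpr hA2
  have hAsq : A ^ 2 = A2 := Real.sq_sqrt hA2.le
  set a : ℝ := (1 + ε) / A with hadef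
  set b : ℝ := (1 - ε) / A with hbdef
  have ha : 0 < a := by positivity
  have hb : 0 < b := div_pos (by linarith) hA
  have hab : a ≠ b := by
    intro h
    have : (1 + ε) = (1 - ε) := by
      rw [hadef, hbdef, div_left_inj' hA.ne'] at h
      linarith [h]
    linarith
  -- the map r ↦ (r • α, 0)
  set Φ : ℝ → (Fin (n + 1) → ℝ) × (Fin (m + 1) → ℝ) :=
    fun r => (r • α, 0) with hΦdef
  have hΦinj : Function.Injective Φ := by
    intro r r' h
    have h1 := congrFun (congrArg Prod.fst h) i0
    simp only [hΦdef, Pi.smul_apply, smul_eq_mul] at h1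
    exact mul_right_cancel₀ hi0 h1
  -- key computation of sums for scaled vectors
  have hsum : ∀ r : ℝ, (∑ i, (r • α) i ^ 2) = r ^ 2 * A2 := by
    intro r
    rw [hA2def, Finset.mul_sum]
    apply Finset.sum_congr rfl
    intro i _
    simp [mul_pow]
  have hzero : (∑ j, (0 : Fin (m + 1) → ℝ) j ^ 2) = 0 := by simp
  -- membership of the four points
  have key : ∀ t : ℝ, (t = 1 ∨ t = -1) → ∀ s : ℝ, (s = 1 ∨ s = -1) →
      Φ (s * ((1 + t * ε) / A)) ∈ C := by
    intro t ht s hs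
    have ht2 : t ^ 2 = 1 := by rcases ht with h | h <;> rw [h] <;> norm_num
    have hs2 : s ^ 2 = 1 := by rcases hs with h | h <;> rw [h] <;> norm_num
    have htpos : 0 < 1 + t * ε := by
      rcases ht with h | h <;> rw [h] <;> nlinarith
    set r : ℝ := s * ((1 + t * ε) / A) with hrdef
    have hs0 : s ≠ 0 := by rcases hs with h | h <;> rw [h] <;> norm_num
    have hr0 : r ≠ 0 := by
      rw [hrdef]; exact mul_ne_zero hs0 (by positivity)
    have hr2 : r ^ 2 * A2 = (1 + t * ε) ^ 2 := by
      rw [hrdef, mul_pow, div_pow, hs2, ← hAsq]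
      field_simp
    have hS : (∑ i, (Φ r).1 i ^ 2) = (1 + t * ε) ^ 2 := by
      simp only [hΦdef]
      rw [hsum, hr2]
    have hT : (∑ j, (Φ r).2 j ^ 2) = 0 := by simp [hΦdef]
    constructor
    · rw [hS, hT, Real.sqrt_sq htpos.le]
      nlinarith [ht2]
    · refine ⟨1 / (8 * t * ε * r), ?_, ?_⟩
      · intro k
        rw [hS, hT]
        have hΦ1 : (Φ r).1 k = r * α k := by simp [hΦdef]
        rw [hΦ1]
        have ht0 : t ≠ 0 := by rcases ht with h | h <;> rw [h] <;> norm_num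
        have hfac : 4 * ((1 + t * ε) ^ 2 + 0 + 1 - ε ^ 2) * (r * α k) - 8 * (r * α k)
            = 8 * t * ε * r * α k := by linear_combination (4 * ε ^ 2 * r * α k) * ht2
        rw [hfac]
        field_simp
      · intro k
        have : (Φ r).2 k = 0 := by simp [hΦdef]
        rw [this]
        ring
  -- forward direction: every critical point is one of the four
  have fwd : ∀ p ∈ C, ∃ r ∈ ({a, -a, b, -b} : Set ℝ), Φ r = p := by
    intro p hp
    obtain ⟨hcon, l, h1, h2⟩ := hp
    set S : ℝ := ∑ i, p.1 i ^ 2 with hSdef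
    set T : ℝ := ∑ j, p.2 j ^ 2 with hTdef
    have hS0 : 0 ≤ S := Finset.sum_nonneg fun i _ => sq_nonneg _
    have hT0 : 0 ≤ T := Finset.sum_nonneg fun j _ => sq_nonneg _
    have hl0 : l ≠ 0 := by
      intro h
      apply hα
      funext k
      have := h1 k
      rw [h] at this
      simpa using this
    have hD : 0 < S + T + 1 - ε ^ 2 := by nlinarith
    have hy : p.2 = 0 := by
      funext k
      have hk := h2 k
      have := mul_eq_zero.mp hk.symm
      rcases this with h | h
      · exact absurd h hl0
      · have := mul_eq_zero.mp h
        rcases this with h' | h'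
        · exact absurd h' (by positivity)
        · exact h'
    have hT : T = 0 := by rw [hTdef, hy]; simp
    have hcon' : (Real.sqrt S - 1) ^ 2 = ε ^ 2 := by linarith [hcon, hT]
    have hsqrtS : Real.sqrt S = 1 + ε ∨ Real.sqrt S = 1 - ε := by
      have hfac : (Real.sqrt S - 1 - ε) * (Real.sqrt S - 1 + ε) = 0 := by
        linear_combination hcon'
      rcases mul_eq_zero.mp hfac with h | h
      · left; linarith
      · right; linarith
    -- S = (1 ± ε)^2
    have hSval : S = (Real.sqrt S) ^ 2 := (Real.sq_sqrt hS0).symm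
    set c : ℝ := l * (4 * (S + T + 1 - ε ^ 2) - 8) with hcdef
    have hαc : ∀ k, α k = c * p.1 k := by
      intro k
      rw [h1 k, hcdef]; ring
    have hA2c : A2 = c ^ 2 * S := by
      rw [hA2def, hSdef, Finset.mul_sum]
      apply Finset.sum_congr rfl
      intro i _
      rw [hαc i]; ring
    have hc0 : c ≠ 0 := by
      intro h
      rw [h] at hA2c
      simp at hA2c
      linarith
    have hx : p.1 = c⁻¹ • α := by
      funext k
      rw [Pi.smul_apply, smul_eq_mul, hαc k]
      field_simp
    rcases hsqrtS with hs | hs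
    · -- S = (1+ε)^2, c⁻¹ = ± a
      have hSv : S = (1 + ε) ^ 2 := by rw [hSval, hs]
      have hne1 : (1 : ℝ) + ε ≠ 0 := by linarith
      have hc2 : (c * (1 + ε)) ^ 2 = A ^ 2 := by
        rw [hAsq, hA2c, hSv]; ring
      have hor : c * (1 + ε) = A ∨ c * (1 + ε) = -A := sq_eq_sq_iff_eq_or_eq_neg.mp hc2
      rcases hor with h | h
      · refine ⟨a, by simp, ?_⟩
        have hcinv : c⁻¹ = a := by
          rw [hadef, ← h, mul_comm c (1 + ε), div_mul_cancel_left₀ hne1]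
        exact (Prod.ext (by rw [hx, hcinv]) (by rw [hy])).symm
      · refine ⟨-a, by simp, ?_⟩
        have hcinv : c⁻¹ = -a := by
          rw [hadef, ← div_neg, ← h, mul_comm c (1 + ε), div_mul_cancel_left₀ hne1]
        exact (Prod.ext (by rw [hx, hcinv]) (by rw [hy])).symm
    · -- S = (1-ε)^2, c⁻¹ = ± b
      have hSv : S = (1 - ε) ^ 2 := by rw [hSval, hs]
      have hne1 : (1 : ℝ) - ε ≠ 0 := by linarith
      have hc2 : (c * (1 - ε)) ^ 2 = A ^ 2 := by
        rw [hAsq, hA2c, hSv]; ring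
      have hor : c * (1 - ε) = A ∨ c * (1 - ε) = -A := sq_eq_sq_iff_eq_or_eq_neg.mp hc2
      rcases hor with h | h
      · refine ⟨b, by simp, ?_⟩
        have hcinv : c⁻¹ = b := by
          rw [hbdef, ← h, mul_comm c (1 - ε), div_mul_cancel_left₀ hne1]
        exact (Prod.ext (by rw [hx, hcinv]) (by rw [hy])).symm
      · refine ⟨-b, by simp, ?_⟩
        have hcinv : c⁻¹ = -b := by
          rw [hbdef, ← div_neg, ← h, mul_comm c (1 - ε), div_mul_cancel_left₀ hne1]
        exact (Prod.ext (by rw [hx, hcinv]) (by rw [hy])).symm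
  -- C equals the image of the four scalars
  have hCeq : C = Φ '' ({a, -a, b, -b} : Set ℝ) := by
    apply Set.eq_of_subset_of_subset
    · intro p hp
      obtain ⟨r, hr, hrp⟩ := fwd p hp
      exact ⟨r, hr, hrp⟩
    · rintro p ⟨r, hr, rfl⟩
      have ha' : a = 1 * ((1 + 1 * ε) / A) := by rw [hadef]; ring
      have hna : -a = (-1) * ((1 + 1 * ε) / A) := by rw [hadef]; ring
      have hb' : b = 1 * ((1 + (-1) * ε) / A) := by rw [hbdef]; ring
      have hnb : -b = (-1) * ((1 + (-1) * ε) / A) := by rw [hbdef]; ring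
      simp only [Set.mem_insert_iff, Set.mem_singleton_iff] at hr
      rcases hr with rfl | rfl | rfl | rfl
      · rw [ha']; exact key 1 (Or.inl rfl) 1 (Or.inl rfl)
      · rw [hna]; exact key 1 (Or.inl rfl) (-1) (Or.inr rfl)
      · rw [hb']; exact key (-1) (Or.inr rfl) 1 (Or.inl rfl)
      · rw [hnb]; exact key (-1) (Or.inr rfl) (-1) (Or.inr rfl)
  have hset : ({a, -a, b, -b} : Set ℝ).ncard = 4 := by
    have h1 : a ≠ -a := by intro h; linarith [ha]
    have h2 : a ≠ -b := by intro h; linarith [ha, hb]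
    have h3 : -a ≠ b := by intro h; linarith [ha, hb]
    have h4 : -a ≠ -b := by intro h; apply hab; linarith
    have h5 : b ≠ -b := by intro h; linarith [hb]
    rw [Set.ncard_insert_of_notMem (by simp [h1, hab, h2]) (Set.toFinite _),
      Set.ncard_insert_of_notMem (by simp [h3, h4]) (Set.toFinite _),
      Set.ncard_insert_of_notMem (by simp [h5]) (Set.toFinite _),
      Set.ncard_singleton]
  constructor
  · rw [hCeq]
    exact (Set.toFinite _).image _
  · rw [hCeq, Set.ncard_image_of_injective _ hΦinj, hset]
end
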